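/- Let w₁, …, w_D ∈ ℝ^d and define the random Fourier feature map φ̃(x) = D^{-1/2}(cos(w₁ᵀx), …, cos(w_Dᵀx), sin(w₁ᵀx), …, sin(w_Dᵀx)) ∈ ℝ^{2D}. Let W ∈ ℝ^{d×D} be the matrix with columns wⱼ. Then for all x, y ∈ ℝ^d, ‖φ̃(x) - φ̃(y)‖₂ ≤ (‖W‖₂/√D) ‖x - y‖₂, where ‖W‖₂ is the spectral norm. -/

import Mathlib

open scoped RealInnerProductSpace

set_option maxHeartbeats 1000000

/-- The random Fourier feature map
`φ̃(x) = D^{-1/2}(cos(w₁ᵀx), …, cos(w_Dᵀx), sin(w₁ᵀx), …, sin(w_Dᵀx)) ∈ ℝ^{2D}`. -/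
noncomputable def rffFeature (d D : ℕ) (w : Fin D → EuclideanSpace ℝ (Fin d))
    (z : EuclideanSpace ℝ (Fin d)) : EuclideanSpace ℝ (Fin D ⊕ Fin D) :=
  (Real.sqrt D)⁻¹ •
    (EuclideanSpace.equiv (Fin D ⊕ Fin D) ℝ).symm
      (Sum.elim (fun j => Real.cos ⟪w j, z⟫) (fun j => Real.sin ⟪w j, z⟫))

theorem rff_lipschitz (d D : ℕ) (hD : 0 < D)
    (w : Fin D → EuclideanSpace ℝ (Fin d)) (x y : EuclideanSpace ℝ (Fin d)) :
    ‖rffFeature d D w x - rffFeature d D w y‖ ≤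
      ‖LinearMap.toContinuousLinearMap
        (Matrix.toEuclideanLin ((Matrix.of fun i j => w j i) : Matrix (Fin d) (Fin D) ℝ))‖ /
        Real.sqrt D * ‖x - y‖ := by
  set A := LinearMap.toContinuousLinearMap
      (Matrix.toEuclideanLin ((Matrix.of fun i j => w j i) : Matrix (Fin d) (Fin D) ℝ)) with hA
  set z := x - y with hz
  have hDpos : (0:ℝ) < Real.sqrt D := Real.sqrt_pos.2 (by exact_mod_cast hD)
  -- component of adjoint
  have hadj : ∀ j : Fin D, (ContinuousLinearMap.adjoint A z) j = ⟪w j, z⟫ := by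
    intro j
    have h1 : (ContinuousLinearMap.adjoint A z) j
        = ⟪ContinuousLinearMap.adjoint A z, EuclideanSpace.single j (1:ℝ)⟫ := by
      rw [EuclideanSpace.inner_single_right]; simp
    rw [h1, ContinuousLinearMap.adjoint_inner_left]
    have h2 : A (EuclideanSpace.single j (1:ℝ)) = w j := by
      apply PiLp.ext
      intro i
      rw [hA]
      simp only [LinearMap.coe_toContinuousLinearMap', Matrix.toEuclideanLin_apply,
        EuclideanSpace.ofLp_single, Matrix.mulVec_single, PiLp.toLp_apply]
      simp
    rw [h2, real_inner_comm]
  have hkey : ∑ j : Fin D, ⟪w j, z⟫ ^ 2 ≤ ‖A‖ ^ 2 * ‖z‖ ^ 2 := by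
    have : ∑ j : Fin D, ⟪w j, z⟫ ^ 2 = ‖ContinuousLinearMap.adjoint A z‖ ^ 2 := by
      rw [EuclideanSpace.norm_eq, Real.sq_sqrt (by positivity)]
      exact Finset.sum_congr rfl fun j _ => by rw [hadj j, Real.norm_eq_abs, sq_abs]
    rw [this]
    have h3 : ‖ContinuousLinearMap.adjoint A z‖ ≤ ‖A‖ * ‖z‖ := by
      calc ‖ContinuousLinearMap.adjoint A z‖ ≤ ‖ContinuousLinearMap.adjoint A‖ * ‖z‖ :=
            (ContinuousLinearMap.adjoint A).le_opNorm z
        _ = ‖A‖ * ‖z‖ := by rw [ContinuousLinearMap.adjoint.norm_map]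
    calc ‖ContinuousLinearMap.adjoint A z‖ ^ 2 ≤ (‖A‖ * ‖z‖) ^ 2 := by
          apply pow_le_pow_left₀ (norm_nonneg _) h3
      _ = ‖A‖ ^ 2 * ‖z‖ ^ 2 := by ring
  -- norm squared of feature difference
  have hc2 : (Real.sqrt D)⁻¹ ^ 2 = ((D:ℝ))⁻¹ := by
    rw [show ((Real.sqrt D)⁻¹)^2 = ((Real.sqrt D)^2)⁻¹ by ring,
      Real.sq_sqrt (le_of_lt (by exact_mod_cast hD : (0:ℝ) < D))]
  have hfeat : ‖rffFeature d D w x - rffFeature d D w y‖ ^ 2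
      ≤ ((D:ℝ))⁻¹ * ∑ j : Fin D, ⟪w j, z⟫ ^ 2 := by
    rw [EuclideanSpace.norm_eq, Real.sq_sqrt (by positivity)]
    have hcomp : ∀ i : Fin D ⊕ Fin D,
        ‖(rffFeature d D w x - rffFeature d D w y) i‖ ^ 2
        = ((D:ℝ))⁻¹ * (Sum.elim
            (fun j => (Real.cos ⟪w j, x⟫ - Real.cos ⟪w j, y⟫) ^ 2)
            (fun j => (Real.sin ⟪w j, x⟫ - Real.sin ⟪w j, y⟫) ^ 2) i) := by
      have heq : ∀ f : Fin D ⊕ Fin D → ℝ, ∀ i,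
          ((EuclideanSpace.equiv (Fin D ⊕ Fin D) ℝ).symm f) i = f i := fun f i => rfl
      rintro (j | j) <;>
        · simp only [rffFeature, PiLp.sub_apply, PiLp.smul_apply, smul_eq_mul,
            heq, Sum.elim_inl, Sum.elim_inr, Real.norm_eq_abs, sq_abs, ← hc2]
          ring
    rw [Finset.sum_congr rfl fun i _ => hcomp i, ← Finset.mul_sum,
      Fintype.sum_sum_type]
    simp only [Sum.elim_inl, Sum.elim_inr]
    rw [← Finset.sum_add_distrib]
    apply mul_le_mul_of_nonneg_left _ (by positivity)
    apply Finset.sum_le_sum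
    intro j _
    set a := ⟪w j, x⟫
    set b := ⟪w j, y⟫
    have hab : ⟪w j, z⟫ = a - b := by rw [hz, inner_sub_right]
    rw [hab]
    nlinarith [Real.sin_sq_add_cos_sq a, Real.sin_sq_add_cos_sq b, Real.cos_sub a b,
      Real.one_sub_sq_div_two_le_cos (x := a - b)]
  -- finish
  have hrhs : (0:ℝ) ≤ ‖A‖ / Real.sqrt D * ‖z‖ := by positivity
  have hsq : ‖rffFeature d D w x - rffFeature d D w y‖ ^ 2
      ≤ (‖A‖ / Real.sqrt D * ‖z‖) ^ 2 := by
    calc ‖rffFeature d D w x - rffFeature d D w y‖ ^ 2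
        ≤ ((D:ℝ))⁻¹ * ∑ j : Fin D, ⟪w j, z⟫ ^ 2 := hfeat
      _ ≤ ((D:ℝ))⁻¹ * (‖A‖ ^ 2 * ‖z‖ ^ 2) := by
          apply mul_le_mul_of_nonneg_left hkey (by positivity)
      _ = (‖A‖ / Real.sqrt D * ‖z‖) ^ 2 := by
          rw [mul_pow, div_pow, Real.sq_sqrt (le_of_lt (by exact_mod_cast hD : (0:ℝ) < D))]
          ring
  have hfin := Real.sqrt_le_sqrt hsq
  rwa [Real.sqrt_sq (norm_nonneg _), Real.sqrt_sq hrhs] at hfin
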